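/- Let Ω = (−1,1)², β > 1, and let u₂ be the checkerboard saddle function with |∇u₂(x)| ≤ C|x₁|^{−1} on the region {2|x₂| ≤ |x₁| ≤ 4|x₂|} ∩ Ω and ∇u₂ = 0 elsewhere. Then ∫_Ω |∇u₂|² log^{−β}(e + |∇u₂|) dx < ∞. -/

import Mathlib

open MeasureTheory Set Real

lemma one_le_logE {u : ℝ} (hu : 0 ≤ u) : 1 ≤ Real.log (Real.exp 1 + u) := by
  have : Real.exp 1 ≤ Real.exp 1 + u := by linarith
  calc (1:ℝ) = Real.log (Real.exp 1) := (Real.log_exp 1).symm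
    _ ≤ _ := Real.log_le_log (Real.exp_pos 1) this

lemma key1 (β : ℝ) (hβ : 1 < β) {t s : ℝ} (ht : 0 ≤ t) (hts : t ≤ s) :
    t^2 * (Real.log (Real.exp 1 + t))^(-β) ≤ s + 2^β * (s^2 * (Real.log (Real.exp 1 + s))^(-β)) := by
  have hs : 0 ≤ s := ht.trans hts
  have hLt := one_le_logE ht
  have hLs := one_le_logE hs
  have hβ0 : (0:ℝ) ≤ β := by linarith
  have hpow2 : (0:ℝ) < 2 ^ β := Real.rpow_pos_of_pos (by norm_num) β
  have hrpow_nonneg : (0:ℝ) ≤ (Real.log (Real.exp 1 + s))^(-β) :=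
    Real.rpow_nonneg (by linarith) _
  by_cases hcase : t^2 ≤ s
  · have h1 : (Real.log (Real.exp 1 + t))^(-β) ≤ 1 :=
      Real.rpow_le_one_of_one_le_of_nonpos hLt (by linarith)
    have : t^2 * (Real.log (Real.exp 1 + t))^(-β) ≤ s := by
      calc t^2 * (Real.log (Real.exp 1 + t))^(-β) ≤ t^2 * 1 := by
            apply mul_le_mul_of_nonneg_left h1 (by positivity)
        _ = t^2 := by ring
        _ ≤ s := hcase
    nlinarith [mul_nonneg hpow2.le (mul_nonneg (sq_nonneg s) hrpow_nonneg)]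
  · push_neg at hcase
    have hE : (1:ℝ) ≤ Real.exp 1 := by
      have := Real.exp_pos 1; nlinarith [Real.add_one_le_exp (1:ℝ)]
    have hsq : Real.exp 1 + s ≤ (Real.exp 1 + t)^2 := by nlinarith
    have hlog2 : Real.log (Real.exp 1 + s) ≤ 2 * Real.log (Real.exp 1 + t) := by
      calc Real.log (Real.exp 1 + s) ≤ Real.log ((Real.exp 1 + t)^2) :=
            Real.log_le_log (by linarith) hsq
        _ = 2 * Real.log (Real.exp 1 + t) := by
            rw [Real.log_pow]; push_cast; ring
    -- (log(e+t))^(-β) ≤ 2^β * (log(e+s))^(-β)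
    have hanti : (Real.log (Real.exp 1 + t))^(-β) ≤ (Real.log (Real.exp 1 + s) / 2)^(-β) := by
      apply Real.rpow_le_rpow_of_nonpos (by linarith) (by linarith) (by linarith)
    have hdiv : (Real.log (Real.exp 1 + s) / 2)^(-β)
        = 2^β * (Real.log (Real.exp 1 + s))^(-β) := by
      rw [Real.div_rpow (by linarith) (by norm_num), Real.rpow_neg (by norm_num : (0:ℝ) ≤ 2)]
      field_simp
    have hmain : t^2 * (Real.log (Real.exp 1 + t))^(-β)
        ≤ s^2 * (2^β * (Real.log (Real.exp 1 + s))^(-β)) := by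
      have h1 : t^2 ≤ s^2 := by nlinarith
      have h2 : (Real.log (Real.exp 1 + t))^(-β) ≤ 2^β * (Real.log (Real.exp 1 + s))^(-β) := by
        rw [← hdiv]; exact hanti
      have h3 : (0:ℝ) ≤ (Real.log (Real.exp 1 + t))^(-β) := Real.rpow_nonneg (by linarith) _
      nlinarith [mul_nonneg hpow2.le hrpow_nonneg]
    nlinarith

lemma intq (β C : ℝ) (hβ : 1 < β) (hC : 0 < C) :
    IntegrableOn (fun r : ℝ => r⁻¹ * (Real.log (Real.exp 1 + C * r⁻¹))^(-β))
      (Ioo 0 1) volume := by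
  set F : ℝ → ℝ := fun r => if r = 0 then 0 else (Real.log (Real.exp 1 + C * r⁻¹))^(1-β) with hF
  set F' : ℝ → ℝ := fun r =>
    (β-1) * (Real.log (Real.exp 1 + C * r⁻¹))^(-β)
      * (C * (r^2)⁻¹ / (Real.exp 1 + C * r⁻¹)) with hF'
  have hE : (0:ℝ) < Real.exp 1 := Real.exp_pos 1
  have hu : ∀ r : ℝ, 0 < r → 0 < Real.exp 1 + C * r⁻¹ := by
    intro r hr; positivity
  have hL : ∀ r : ℝ, 0 < r → 1 ≤ Real.log (Real.exp 1 + C * r⁻¹) := by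
    intro r hr; exact one_le_logE (by positivity)
  -- derivative
  have hderiv : ∀ x ∈ Ioo (0:ℝ) 1, HasDerivAt F (F' x) x := by
    intro x hx
    have hx0 : x ≠ 0 := ne_of_gt hx.1
    have hux := hu x hx.1
    have hform : HasDerivAt (fun r : ℝ => (Real.log (Real.exp 1 + C * r⁻¹))^(1-β))
        ((C * (-(x^2)⁻¹) / (Real.exp 1 + C * x⁻¹)) * (1-β)
          * (Real.log (Real.exp 1 + C * x⁻¹))^((1-β)-1)) x := by
      have h1 : HasDerivAt (fun r : ℝ => Real.exp 1 + C * r⁻¹) (C * (-(x^2)⁻¹)) x :=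
        ((hasDerivAt_inv hx0).const_mul C).const_add (Real.exp 1)
      have h2 := h1.log (ne_of_gt hux)
      exact h2.rpow_const (Or.inl (by have := hL x hx.1; linarith))
    have heq : F =ᶠ[nhds x] fun r : ℝ => (Real.log (Real.exp 1 + C * r⁻¹))^(1-β) := by
      filter_upwards [isOpen_ne.mem_nhds hx0] with r hr
      simp [hF, hr]
    have : HasDerivAt F ((C * (-(x^2)⁻¹) / (Real.exp 1 + C * x⁻¹)) * (1-β)
          * (Real.log (Real.exp 1 + C * x⁻¹))^((1-β)-1)) x :=
      hform.congr_of_eventuallyEq heq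
    convert this using 1
    have he : (1-β)-1 = -β := by ring
    rw [hF', he]; field_simp; ring
  -- nonneg
  have hpos : ∀ x ∈ Ioo (0:ℝ) 1, 0 ≤ F' x := by
    intro x hx
    have hux := hu x hx.1
    have hL' := hL x hx.1
    have h1 : (0:ℝ) ≤ (Real.log (Real.exp 1 + C * x⁻¹))^(-β) :=
      Real.rpow_nonneg (by linarith) _
    have hx1 := hx.1
    have : (0:ℝ) ≤ C * (x^2)⁻¹ / (Real.exp 1 + C * x⁻¹) := by positivity
    have hb : (0:ℝ) ≤ β - 1 := by linarith
    positivity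
  -- continuity on Icc 0 1
  have hcont : ContinuousOn F (Icc 0 1) := by
    intro x hx
    rcases eq_or_ne x 0 with rfl | hx0
    · -- continuity at 0
      have h0 : F 0 = 0 := by simp [hF]
      rw [ContinuousWithinAt, h0]
      have hIcc : Icc (0:ℝ) 1 ⊆ {0} ∪ Ioi 0 := by
        intro y hy; rcases eq_or_lt_of_le hy.1 with h | h
        · exact Or.inl (by simp [h.symm])
        · exact Or.inr h
      apply Filter.Tendsto.mono_left _ (nhdsWithin_mono _ hIcc)
      rw [nhdsWithin_union]
      apply Filter.Tendsto.sup
      · apply tendsto_nhdsWithin_congr (f := fun _ => (0:ℝ))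
        · intro y hy; simp only [mem_singleton_iff] at hy; simp [hF, hy]
        · exact tendsto_const_nhds
      · have h1 : Filter.Tendsto (fun r : ℝ => Real.log (Real.exp 1 + C * r⁻¹))
            (nhdsWithin 0 (Ioi 0)) Filter.atTop := by
          apply Real.tendsto_log_atTop.comp
          apply Filter.tendsto_atTop_add_const_left
          exact Filter.Tendsto.const_mul_atTop hC tendsto_inv_nhdsGT_zero
        have h2 : Filter.Tendsto (fun y : ℝ => y ^ (1-β)) Filter.atTop (nhds 0) := by
          have := tendsto_rpow_neg_atTop (y := β - 1) (by linarith)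
          convert this using 2 with y
          ring_nf
        have h3 := h2.comp h1
        apply tendsto_nhdsWithin_congr (f := fun r : ℝ =>
          (Real.log (Real.exp 1 + C * r⁻¹))^(1-β))
        · intro y hy; simp [hF, ne_of_gt (mem_Ioi.mp hy)]
        · exact h3
    · -- continuity at x ≠ 0
      apply ContinuousAt.continuousWithinAt
      have hx1 : 0 < x := lt_of_le_of_ne hx.1 (Ne.symm hx0)
      have hux := hu x hx1
      have heq : F =ᶠ[nhds x] fun r : ℝ => (Real.log (Real.exp 1 + C * r⁻¹))^(1-β) := by
        filter_upwards [isOpen_ne.mem_nhds hx0] with r hr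
        simp [hF, hr]
      rw [continuousAt_congr heq]
      apply ContinuousAt.rpow_const
      · exact (continuousAt_const.add (continuousAt_const.mul (continuousAt_inv₀ hx0))).log
          (ne_of_gt hux)
      · left; have := hL x hx1; linarith
  have hint : IntegrableOn F' (Ioo 0 1) volume :=
    (intervalIntegral.integrableOn_deriv_of_nonneg hcont hderiv hpos).mono_set Ioo_subset_Ioc_self
  -- compare
  have hK : (0:ℝ) < (Real.exp 1 + C) / ((β-1)*C) := by
    apply div_pos (by linarith) (by nlinarith)
  set K := (Real.exp 1 + C) / ((β-1)*C) with hKdef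
  apply Integrable.mono' (hint.const_mul K)
  · apply Measurable.aestronglyMeasurable
    have mlog : Measurable fun r : ℝ => Real.log (Real.exp 1 + C * r⁻¹) :=
      (measurable_const.add (measurable_const.mul measurable_inv)).log
    exact measurable_inv.mul
      ((by fun_prop : Measurable fun v : ℝ => v ^ (-β)).comp mlog)
  · rw [ae_restrict_iff' measurableSet_Ioo]
    filter_upwards with r hr
    have hr1 := hr.1
    have hur := hu r hr.1
    have hLr := hL r hr.1
    have h1 : (0:ℝ) ≤ (Real.log (Real.exp 1 + C * r⁻¹))^(-β) :=
      Real.rpow_nonneg (by linarith) _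
    rw [Real.norm_of_nonneg (by positivity)]
    rw [hF']
    rw [show K * ((β-1) * Real.log (Real.exp 1 + C * r⁻¹) ^ (-β)
        * (C * (r^2)⁻¹ / (Real.exp 1 + C * r⁻¹)))
      = (K * (β-1) * (C * (r^2)⁻¹ / (Real.exp 1 + C * r⁻¹)))
        * Real.log (Real.exp 1 + C * r⁻¹) ^ (-β) by ring]
    apply mul_le_mul_of_nonneg_right _ h1
    rw [hKdef, div_mul_eq_mul_div, div_mul_div_comm, le_div_iff₀ (mul_pos (mul_pos (by linarith : (0:ℝ) < β-1) hC) hur)]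
    have hrr : r⁻¹ * r = 1 := inv_mul_cancel₀ (ne_of_gt hr.1)
    have hr2inv : (r^2)⁻¹ = r⁻¹ * r⁻¹ := by rw [sq, mul_inv]
    have hainv : (0:ℝ) < r⁻¹ := inv_pos.mpr hr.1
    have ha : 1 ≤ r⁻¹ := by nlinarith [mul_nonneg hainv.le (by linarith [hr.2] : (0:ℝ) ≤ 1 - r)]
    have hkey : Real.exp 1 * r⁻¹ ≤ Real.exp 1 * (r⁻¹ * r⁻¹) := by
      have h2 := mul_le_mul_of_nonneg_left ha (mul_nonneg hE.le hainv.le)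
      nlinarith [h2]
    rw [hr2inv]
    nlinarith [mul_nonneg (mul_nonneg (by linarith : (0:ℝ) ≤ β - 1) hC.le)
      (sub_nonneg.mpr hkey)]

lemma intQ (β C : ℝ) (hβ : 1 < β) (hC : 0 < C) :
    IntegrableOn (fun r : ℝ => |r|⁻¹ * (Real.log (Real.exp 1 + C * |r|⁻¹))^(-β))
      (Ioo (-1) 1) volume := by
  set q : ℝ → ℝ := fun r => r⁻¹ * (Real.log (Real.exp 1 + C * r⁻¹))^(-β) with hq
  set Q : ℝ → ℝ := fun r => |r|⁻¹ * (Real.log (Real.exp 1 + C * |r|⁻¹))^(-β) with hQ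
  have hqint : IntegrableOn q (Ioo 0 1) volume := intq β C hβ hC
  have hpos : IntegrableOn Q (Ioo 0 1) volume := by
    apply hqint.congr_fun _ measurableSet_Ioo
    intro r hr
    simp [hq, hQ, abs_of_pos hr.1]
  have hnegpre : (Neg.neg ⁻¹' (Ioo (0:ℝ) 1)) = Ioo (-1) 0 := by
    ext x; simp only [mem_preimage, mem_Ioo]; constructor <;> intro h <;> constructor <;> linarith [h.1, h.2]
  have hcomp : IntegrableOn (q ∘ Neg.neg) (Ioo (-1) 0) volume := by
    rw [← hnegpre]
    exact (MeasurePreserving.integrableOn_comp_preimage (Measure.measurePreserving_neg _)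
      (Homeomorph.neg ℝ).measurableEmbedding).2 hqint
  have hneg : IntegrableOn Q (Ioo (-1) 0) volume := by
    apply hcomp.congr_fun _ measurableSet_Ioo
    intro r hr
    simp only [Function.comp_apply, hq, hQ]
    rw [abs_of_neg hr.2]
  have h0 : IntegrableOn Q {0} volume := by
    rw [IntegrableOn, Measure.restrict_eq_zero.mpr (by simp)]
    exact integrable_zero_measure
  have := (hneg.union hpos).union h0
  apply this.mono_set
  intro x hx
  rcases lt_trichotomy x 0 with h | h | h
  · exact Or.inl (Or.inl ⟨hx.1, h⟩)
  · exact Or.inr (by simp [h])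
  · exact Or.inl (Or.inr ⟨h, hx.2⟩)

/-- Finiteness of the energy ∫_Ω |∇u₂|² log^{-β}(e+|∇u₂|) dx for β > 1. -/
theorem stmt_10 (β : ℝ) (hβ : 1 < β) (C : ℝ) (hC : 0 < C) (g : ℝ × ℝ → ℝ)
    (hmeas : Measurable g)
    (hnn : ∀ x, 0 ≤ g x)
    (hbound : ∀ x : ℝ × ℝ,
      x ∈ ({y : ℝ × ℝ | 2 * |y.2| ≤ |y.1| ∧ |y.1| ≤ 4 * |y.2|} ∩
        (Set.Ioo (-1 : ℝ) 1 ×ˢ Set.Ioo (-1 : ℝ) 1)) → g x ≤ C * |x.1|⁻¹)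
    (hzero : ∀ x : ℝ × ℝ,
      x ∉ {y : ℝ × ℝ | 2 * |y.2| ≤ |y.1| ∧ |y.1| ≤ 4 * |y.2|} → g x = 0) :
    IntegrableOn (fun x => (g x) ^ 2 * (Real.log (Real.exp 1 + g x)) ^ (-β))
      (Set.Ioo (-1 : ℝ) 1 ×ˢ Set.Ioo (-1 : ℝ) 1) volume := by
  set I : Set ℝ := Set.Ioo (-1 : ℝ) 1 with hI
  set cone : Set (ℝ × ℝ) := {y : ℝ × ℝ | 2 * |y.2| ≤ |y.1| ∧ |y.1| ≤ 4 * |y.2|} with hcone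
  set f : ℝ × ℝ → ℝ := fun x => (g x) ^ 2 * (Real.log (Real.exp 1 + g x)) ^ (-β) with hf
  have hconeMeas : MeasurableSet cone := by
    rw [hcone, Set.setOf_and]
    exact (measurableSet_le ((measurable_snd.abs).const_mul 2) (measurable_fst.abs)).inter
      (measurableSet_le (measurable_fst.abs) ((measurable_snd.abs).const_mul 4))
  have hfmeas : Measurable f :=
    (hmeas.pow_const 2).mul (((measurable_const.add hmeas).log).pow_const (-β))
  have hfnn : ∀ x, 0 ≤ f x := by
    intro x
    apply mul_nonneg (sq_nonneg _)
    exact Real.rpow_nonneg (by linarith [one_le_logE (hnn x)]) _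
  -- the dominating 1d profile
  set H : ℝ → ℝ := fun r => C * |r|⁻¹
      + 2^β * ((C * |r|⁻¹)^2 * (Real.log (Real.exp 1 + C * |r|⁻¹))^(-β)) with hH
  have hHnn : ∀ r, 0 ≤ H r := by
    intro r
    have h1 : (0:ℝ) ≤ C * |r|⁻¹ := by positivity
    have h2 : (0:ℝ) ≤ (Real.log (Real.exp 1 + C * |r|⁻¹))^(-β) :=
      Real.rpow_nonneg (by linarith [one_le_logE h1]) _
    have h3 : (0:ℝ) < (2:ℝ)^β := Real.rpow_pos_of_pos (by norm_num) _
    positivity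
  -- pointwise bound on Ω
  have hfle : ∀ x ∈ I ×ˢ I, f x ≤ cone.indicator (fun y => H y.1) x := by
    intro x hx
    by_cases hxc : x ∈ cone
    · rw [Set.indicator_of_mem hxc]
      have hb := hbound x ⟨hxc, hx⟩
      exact key1 β hβ (hnn x) hb
    · rw [Set.indicator_of_notMem hxc]
      rw [hf]
      simp [hzero x hxc]
  constructor
  · exact hfmeas.aestronglyMeasurable.restrict
  · rw [HasFiniteIntegral]
    have hnorm : ∀ x, (‖f x‖₊ : ENNReal) = ENNReal.ofReal (f x) := fun x =>
      Real.enorm_eq_ofReal (hfnn x)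
    calc ∫⁻ x in I ×ˢ I, (‖f x‖₊ : ENNReal) ∂volume
        = ∫⁻ x in I ×ˢ I, ENNReal.ofReal (f x) ∂volume := by
          congr 1; funext x; exact hnorm x
      _ ≤ ∫⁻ x in I ×ˢ I,
            cone.indicator (fun y => ENNReal.ofReal (H y.1)) x ∂volume := by
          apply lintegral_mono_ae
          rw [ae_restrict_iff' (measurableSet_Ioo.prod measurableSet_Ioo)]
          filter_upwards with x hx
          have := hfle x hx
          by_cases hxc : x ∈ cone
          · rw [Set.indicator_of_mem hxc] at this ⊢
            exact ENNReal.ofReal_le_ofReal this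
          · rw [Set.indicator_of_notMem hxc] at this ⊢
            rw [ENNReal.ofReal_le_iff_le_toReal (by simp)]
            simpa using this
      _ = ∫⁻ a in I, ∫⁻ b in I,
            cone.indicator (fun y => ENNReal.ofReal (H y.1)) (a, b) ∂volume ∂volume := by
          rw [Measure.volume_eq_prod ℝ ℝ, ← Measure.prod_restrict]
          apply lintegral_prod
          have mlog : Measurable fun r : ℝ => Real.log (Real.exp 1 + C * |r|⁻¹) :=
            (measurable_const.add (measurable_const.mul measurable_abs.inv)).log
          have hHmeas : Measurable H := by
            rw [hH]
            exact (measurable_const.mul measurable_abs.inv).add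
              (measurable_const.mul
                (((measurable_const.mul measurable_abs.inv).pow_const 2).mul
                  (mlog.pow_const (-β))))
          exact ((ENNReal.measurable_ofReal.comp
            (hHmeas.comp measurable_fst)).indicator hconeMeas).aemeasurable
      _ ≤ ∫⁻ a in I, ENNReal.ofReal (H a * |a|) ∂volume := by
          apply lintegral_mono
          intro a
          dsimp only
          have hTsub : {b : ℝ | 2 * |b| ≤ |a| ∧ |a| ≤ 4 * |b|} ⊆ Icc (-(|a|/2)) (|a|/2) := by
            intro b hb
            have h1 := hb.1
            constructor
            · cases abs_cases b with
              | inl h => linarith [h.1, abs_nonneg a]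
              | inr h => linarith [h.1]
            · cases abs_cases b with
              | inl h => linarith [h.1]
              | inr h => linarith [h.1, abs_nonneg a]
          have hTmeas : MeasurableSet {b : ℝ | 2 * |b| ≤ |a| ∧ |a| ≤ 4 * |b|} := by
            rw [Set.setOf_and]
            exact (measurableSet_le (measurable_abs.const_mul 2) measurable_const).inter
              (measurableSet_le measurable_const (measurable_abs.const_mul 4))
          have hind : (fun b => cone.indicator (fun y => ENNReal.ofReal (H y.1)) (a, b))
              = Set.indicator {b : ℝ | 2 * |b| ≤ |a| ∧ |a| ≤ 4 * |b|}
                  (fun _ => ENNReal.ofReal (H a)) := by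
            funext b
            have hmem : (a, b) ∈ cone ↔ b ∈ {b : ℝ | 2 * |b| ≤ |a| ∧ |a| ≤ 4 * |b|} := Iff.rfl
            by_cases hb : (a, b) ∈ cone
            · rw [Set.indicator_of_mem hb, Set.indicator_of_mem (hmem.mp hb)]
            · rw [Set.indicator_of_notMem hb,
                Set.indicator_of_notMem (fun h => hb (hmem.mpr h))]
          rw [hind, lintegral_indicator hTmeas, setLIntegral_const]
          calc ENNReal.ofReal (H a) * (volume.restrict I) {b | 2 * |b| ≤ |a| ∧ |a| ≤ 4 * |b|}
              ≤ ENNReal.ofReal (H a) * volume (Icc (-(|a|/2)) (|a|/2)) := by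
                apply mul_le_mul_right
                rw [Measure.restrict_apply hTmeas]
                exact measure_mono (inter_subset_left.trans hTsub)
            _ = ENNReal.ofReal (H a) * ENNReal.ofReal |a| := by
                rw [Real.volume_Icc]
                congr 1
                ring_nf
            _ = ENNReal.ofReal (H a * |a|) := (ENNReal.ofReal_mul (hHnn a)).symm
      _ ≤ ∫⁻ a in I, ENNReal.ofReal
            (C + 2^β * C^2 * (|a|⁻¹ * (Real.log (Real.exp 1 + C * |a|⁻¹))^(-β))) ∂volume := by
          apply lintegral_mono
          intro a
          dsimp only
          apply ENNReal.ofReal_le_ofReal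
          rcases eq_or_ne a 0 with rfl | ha
          · simp [hH]
            positivity
          · have haa : |a|⁻¹ * |a| = 1 := inv_mul_cancel₀ (by simpa using ha)
            rw [hH]
            apply le_of_eq
            set L := (Real.log (Real.exp 1 + C * |a|⁻¹))^(-β) with hL
            linear_combination (C + 2^β * C^2 * L * |a|⁻¹) * haa
      _ < ⊤ := by
          apply IntegrableOn.setLIntegral_lt_top
          exact (integrable_const C).add (((intQ β C hβ hC)).const_mul (2^β * C^2))
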